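/- Let A be a 2×2 matrix with A² + A − 3I = 0 and v with {v, Av} linearly independent. Then Av + v = ∑_{i=1}^{∞} ε_i A^{−i}(Av) where ε_1 = −1 and ε_i = 1 for i ≥ 2. Consequently for 𝒟 = {0, v, −Av}, the set T(A,𝒟) is connected. -/

import Mathlib

open Matrix Finset Filter Topology

/-- The self-affine set `T(A, D) = {∑_{i≥1} A^{-i} d_i : d_i ∈ D}`. -/
noncomputable def selfAffine (A : Matrix (Fin 2) (Fin 2) ℝ) (D : Set (Fin 2 → ℝ)) :
    Set (Fin 2 → ℝ) :=
  { x | ∃ d : ℕ → (Fin 2 → ℝ), (∀ n, d n ∈ D) ∧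
      HasSum (fun n => (A⁻¹ ^ (n + 1)) *ᵥ d n) x }

namespace S15

noncomputable section
variable (A : Matrix (Fin 2) (Fin 2) ℝ) (v : Fin 2 → ℝ)

def φ (p : ℝ × ℝ) : Fin 2 → ℝ := p.1 • v + p.2 • (A *ᵥ v)
def step (p : ℝ × ℝ) : ℝ × ℝ := (p.1/3 + p.2, p.1/3)
def NN (p : ℝ × ℝ) : ℝ := |p.1| + (3/2) * |p.2|

variable (h : A * A + A - (3 : ℝ) • (1 : Matrix (Fin 2) (Fin 2) ℝ) = 0)

include h

lemma mulA_rinv : A * ((3:ℝ)⁻¹ • (A + 1)) = 1 := by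
  have hAA : A * A + A = (3 : ℝ) • 1 := sub_eq_zero.mp h
  rw [Matrix.mul_smul, mul_add, mul_one, hAA, smul_smul]
  norm_num

lemma invA : A⁻¹ = (3:ℝ)⁻¹ • (A + 1) := inv_eq_right_inv (mulA_rinv A h)

lemma invA_mul : A⁻¹ * A = 1 := by
  rw [invA A h]; exact mul_eq_one_comm.mp (mulA_rinv A h)

lemma mulVec_invA_Av : A⁻¹ *ᵥ (A *ᵥ v) = v := by
  rw [mulVec_mulVec, invA_mul A h, one_mulVec]

lemma mulVec_invA_v : A⁻¹ *ᵥ v = (3:ℝ)⁻¹ • (A *ᵥ v + v) := by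
  rw [invA A h, smul_mulVec, add_mulVec, one_mulVec]

lemma invA_phi (p : ℝ × ℝ) : A⁻¹ *ᵥ φ A v p = φ A v (step p) := by
  simp only [φ, step, mulVec_add, mulVec_smul, mulVec_invA_Av A v h, mulVec_invA_v A v h]
  module

lemma pow_invA_phi (n : ℕ) (p : ℝ × ℝ) : (A⁻¹ ^ n) *ᵥ φ A v p = φ A v (step^[n] p) := by
  induction n with
  | zero => simp
  | succ n ih =>
      rw [pow_succ', ← mulVec_mulVec, ih, invA_phi A v h, Function.iterate_succ_apply']

omit h

lemma NN_nonneg (p : ℝ × ℝ) : 0 ≤ NN p := by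
  have := abs_nonneg p.1; have := abs_nonneg p.2
  simp only [NN]; nlinarith

lemma NN_step (p : ℝ × ℝ) : NN (step p) ≤ (5/6) * NN p := by
  simp only [NN, step]
  have h1 := abs_add_le (p.1/3) p.2
  have h2 : |p.1/3| = |p.1|/3 := by rw [abs_div]; norm_num
  have := abs_nonneg p.1; have := abs_nonneg p.2
  nlinarith

lemma NN_iter (n : ℕ) (p : ℝ × ℝ) : NN (step^[n] p) ≤ (5/6)^n * NN p := by
  induction n with
  | zero => simp
  | succ n ih =>
      rw [Function.iterate_succ_apply']
      calc NN (step (step^[n] p)) ≤ (5/6) * NN (step^[n] p) := NN_step _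
        _ ≤ (5/6) * ((5/6)^n * NN p) := by nlinarith [NN_nonneg (step^[n] p)]
        _ = (5/6)^(n+1) * NN p := by ring

lemma norm_phi_le (p : ℝ × ℝ) : ‖φ A v p‖ ≤ (‖v‖ + ‖A *ᵥ v‖) * NN p := by
  have h1 : ‖φ A v p‖ ≤ |p.1| * ‖v‖ + |p.2| * ‖A *ᵥ v‖ := by
    calc ‖φ A v p‖ ≤ ‖p.1 • v‖ + ‖p.2 • (A *ᵥ v)‖ := norm_add_le _ _
      _ = |p.1| * ‖v‖ + |p.2| * ‖A *ᵥ v‖ := by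
          rw [norm_smul, norm_smul, Real.norm_eq_abs, Real.norm_eq_abs]
  have h2 : |p.1| ≤ NN p := by simp only [NN]; nlinarith [abs_nonneg p.2]
  have h3 : |p.2| ≤ NN p := by simp only [NN]; nlinarith [abs_nonneg p.1, abs_nonneg p.2]
  nlinarith [norm_nonneg v, norm_nonneg (A *ᵥ v), abs_nonneg p.1, abs_nonneg p.2]

include h in
lemma norm_term_le (p : ℝ × ℝ) (n : ℕ) :
    ‖(A⁻¹ ^ (n+1)) *ᵥ φ A v p‖ ≤ ((‖v‖ + ‖A *ᵥ v‖) * NN p) * (5/6)^n := by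
  rw [pow_invA_phi A v h]
  have hC : (0:ℝ) ≤ ‖v‖ + ‖A *ᵥ v‖ := by positivity
  have hr : (0:ℝ) ≤ (5/6:ℝ)^n := by positivity
  calc ‖φ A v (step^[n+1] p)‖ ≤ (‖v‖ + ‖A *ᵥ v‖) * NN (step^[n+1] p) := norm_phi_le A v _
    _ ≤ (‖v‖ + ‖A *ᵥ v‖) * ((5/6)^(n+1) * NN p) :=
        mul_le_mul_of_nonneg_left (NN_iter (n+1) p) hC
    _ ≤ (‖v‖ + ‖A *ᵥ v‖) * ((5/6)^n * NN p) := by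
        have h2 : ((5:ℝ)/6)^(n+1) ≤ (5/6)^n := by
          rw [pow_succ]; nlinarith
        exact mul_le_mul_of_nonneg_left
          (mul_le_mul_of_nonneg_right h2 (NN_nonneg p)) hC
    _ = ((‖v‖ + ‖A *ᵥ v‖) * NN p) * (5/6)^n := by ring

lemma summable_geom_mul (c : ℝ) : Summable (fun n : ℕ => c * (5/6)^n) :=
  (summable_geometric_of_lt_one (by norm_num) (by norm_num)).mul_left c

include h in
lemma summable_phi_seq (q : ℕ → ℝ × ℝ) (M : ℝ) (hM : ∀ n, NN (q n) ≤ M) :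
    Summable (fun n => (A⁻¹ ^ (n+1)) *ᵥ φ A v (q n)) := by
  apply Summable.of_norm_bounded (g := fun n => ((‖v‖ + ‖A *ᵥ v‖) * M) * (5/6)^n)
    (summable_geom_mul _)
  intro n
  have hC : (0:ℝ) ≤ ‖v‖ + ‖A *ᵥ v‖ := by positivity
  calc ‖(A⁻¹ ^ (n+1)) *ᵥ φ A v (q n)‖ ≤ ((‖v‖ + ‖A *ᵥ v‖) * NN (q n)) * (5/6)^n :=
        norm_term_le A v h _ n
    _ ≤ ((‖v‖ + ‖A *ᵥ v‖) * M) * (5/6)^n := by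
        gcongr
        exact hM n


lemma step_add (p q : ℝ × ℝ) : step (p + q) = step p + step q := by
  simp only [step, Prod.mk_add_mk, Prod.ext_iff, Prod.fst_add, Prod.snd_add]
  constructor <;> ring

lemma iter_step_add (n : ℕ) (p q : ℝ × ℝ) :
    step^[n] (p + q) = step^[n] p + step^[n] q := by
  induction n with
  | zero => simp
  | succ n ih => rw [Function.iterate_succ_apply', Function.iterate_succ_apply',
      Function.iterate_succ_apply', ih, step_add]

lemma phi_add (p q : ℝ × ℝ) : φ A v (p + q) = φ A v p + φ A v q := by
  simp only [φ, Prod.fst_add, Prod.snd_add]; module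

lemma Av_eq : A *ᵥ v = φ A v (0, 1) := by simp [φ]

lemma key_coords (n : ℕ) :
    step^[n] ((2:ℝ), (1:ℝ)) = step^[n+1] (2,1) + step^[n+2] ((0:ℝ),(1:ℝ)) := by
  have h1 : step ((0:ℝ),(1:ℝ)) = ((1:ℝ),(0:ℝ)) := by simp [step]
  have h2 : step ((3:ℝ),(1:ℝ)) = ((2:ℝ),(1:ℝ)) := by
    simp only [step, Prod.ext_iff]; norm_num
  calc step^[n] ((2:ℝ),(1:ℝ)) = step^[n] (step (3,1)) := by rw [h2]
    _ = step^[n+1] ((3:ℝ),(1:ℝ)) := (Function.iterate_succ_apply step n _).symm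
    _ = step^[n+1] (((2:ℝ),(1:ℝ)) + ((1:ℝ),(0:ℝ))) := by norm_num
    _ = step^[n+1] (2,1) + step^[n+1] ((1:ℝ),(0:ℝ)) := iter_step_add _ _ _
    _ = step^[n+1] (2,1) + step^[n+2] ((0:ℝ),(1:ℝ)) := by
        rw [show (n+2) = (n+1)+1 from rfl, Function.iterate_succ_apply step (n+1), h1]

include h in
lemma partial_sum_eq (n : ℕ) :
    ∑ i ∈ range (n+1), (if i = 0 then (-1:ℝ) else 1) • (A⁻¹ ^ (i + 1) *ᵥ (A *ᵥ v))
      = (A *ᵥ v + v) - φ A v (step^[n] (2,1)) := by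
  induction n with
  | zero =>
      rw [sum_range_one]
      have h0 : (if (0:ℕ) = 0 then (-1:ℝ) else 1) = -1 := by norm_num
      rw [h0, pow_one, mulVec_invA_Av A v h, Function.iterate_zero_apply]
      simp only [φ]
      module
  | succ n ih =>
      rw [sum_range_succ, ih, if_neg (Nat.succ_ne_zero n), one_smul, Av_eq A v,
        pow_invA_phi A v h]
      rw [show n + 1 + 1 = n + 2 from rfl, key_coords n, phi_add]
      abel

include h in
lemma part1 : HasSum (fun i : ℕ => (if i = 0 then (-1:ℝ) else 1) • (A⁻¹ ^ (i+1) *ᵥ (A *ᵥ v)))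
    (A *ᵥ v + v) := by
  set f := fun i : ℕ => (if i = 0 then (-1:ℝ) else 1) • (A⁻¹ ^ (i+1) *ᵥ (A *ᵥ v)) with hf
  have hsummable : Summable f := by
    apply Summable.of_norm_bounded
      (g := fun n => ((‖v‖ + ‖A *ᵥ v‖) * NN ((0:ℝ),(1:ℝ))) * (5/6)^n) (summable_geom_mul _)
    intro i
    have hni : ‖f i‖ = ‖A⁻¹ ^ (i+1) *ᵥ (A *ᵥ v)‖ := by
      by_cases hi : i = 0 <;> simp [hf, hi, norm_smul, -mulVec_fin_two]
    rw [hni]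
    conv_lhs => rw [Av_eq A v]
    exact norm_term_le A v h _ i
  obtain ⟨s, hs⟩ := hsummable
  have hz : Tendsto (fun n => φ A v (step^[n] ((2:ℝ),(1:ℝ)))) atTop (𝓝 0) := by
    refine squeeze_zero_norm (a := fun n => ((‖v‖ + ‖A *ᵥ v‖) * NN ((2:ℝ),(1:ℝ))) * (5/6)^n)
      (fun n => ?_) ?_
    ·
      have hC : (0:ℝ) ≤ ‖v‖ + ‖A *ᵥ v‖ := by positivity
      calc ‖φ A v (step^[n] ((2:ℝ),(1:ℝ)))‖
          ≤ (‖v‖ + ‖A *ᵥ v‖) * NN (step^[n] ((2:ℝ),(1:ℝ))) := norm_phi_le A v _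
        _ ≤ (‖v‖ + ‖A *ᵥ v‖) * ((5/6)^n * NN ((2:ℝ),(1:ℝ))) :=
            mul_le_mul_of_nonneg_left (NN_iter n _) hC
        _ = ((‖v‖ + ‖A *ᵥ v‖) * NN ((2:ℝ),(1:ℝ))) * (5/6)^n := by ring
    · simpa using (tendsto_pow_atTop_nhds_zero_of_lt_one (r := (5/6:ℝ)) (by norm_num)
        (by norm_num)).const_mul ((‖v‖ + ‖A *ᵥ v‖) * NN ((2:ℝ),(1:ℝ)))
  have htend : Tendsto (fun n => ∑ i ∈ range n, f i) atTop (𝓝 (A *ᵥ v + v)) := by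
    rw [← Filter.tendsto_add_atTop_iff_nat 1]
    have heq : (fun n => ∑ i ∈ range (n+1), f i)
        = fun n => (A *ᵥ v + v) - φ A v (step^[n] ((2:ℝ),(1:ℝ))) :=
      funext (fun n => partial_sum_eq A v h n)
    rw [heq]
    simpa using (hz.const_sub (A *ᵥ v + v))
  have : (A *ᵥ v + v) = s := tendsto_nhds_unique htend hs.tendsto_sum_nat
  rw [this]; exact hs


/-! ### The adapted seminorm ρ -/

section basis
variable (hv : LinearIndependent ℝ ![v, A *ᵥ v])

def bas : Module.Basis (Fin 2) ℝ (Fin 2 → ℝ) :=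
  basisOfLinearIndependentOfCardEqFinrank hv (by simp)

lemma bas0 : bas A v hv 0 = v := by
  rw [show bas A v hv 0 = ![v, A *ᵥ v] 0 from congrFun (coe_basisOfLinearIndependentOfCardEqFinrank hv _) 0]
  simp

lemma bas1 : bas A v hv 1 = A *ᵥ v := by
  rw [show bas A v hv 1 = ![v, A *ᵥ v] 1 from congrFun (coe_basisOfLinearIndependentOfCardEqFinrank hv _) 1]
  simp

def ρ (x : Fin 2 → ℝ) : ℝ := NN ((bas A v hv).repr x 0, (bas A v hv).repr x 1)

lemma phi_eq_bas (p : ℝ × ℝ) : φ A v p = p.1 • bas A v hv 0 + p.2 • bas A v hv 1 := by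
  rw [bas0, bas1]; rfl

lemma repr_phi (p : ℝ × ℝ) (i : Fin 2) :
    (bas A v hv).repr (φ A v p) i = (![p.1, p.2] : Fin 2 → ℝ) i := by
  rw [phi_eq_bas A v hv]
  fin_cases i <;> simp [Module.Basis.repr_self]

lemma rho_phi (p : ℝ × ℝ) : ρ A v hv (φ A v p) = NN p := by
  simp only [ρ, repr_phi A v hv]
  simp [NN]

lemma phi_repr (x : Fin 2 → ℝ) :
    φ A v ((bas A v hv).repr x 0, (bas A v hv).repr x 1) = x := by
  have := (bas A v hv).sum_repr x
  rw [Fin.sum_univ_two] at this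
  rw [phi_eq_bas A v hv]
  exact this

lemma rho_nonneg (x : Fin 2 → ℝ) : 0 ≤ ρ A v hv x := NN_nonneg _

lemma rho_zero : ρ A v hv 0 = 0 := by simp [ρ, NN]

lemma rho_eq_zero {x : Fin 2 → ℝ} (hx : ρ A v hv x = 0) : x = 0 := by
  simp only [ρ, NN] at hx
  have h1 : |(bas A v hv).repr x 0| = 0 ∧ |(bas A v hv).repr x 1| = 0 := by
    constructor <;> nlinarith [abs_nonneg ((bas A v hv).repr x 0),
      abs_nonneg ((bas A v hv).repr x 1)]
  obtain ⟨e0, e1⟩ := h1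
  rw [abs_eq_zero] at e0 e1
  have := phi_repr A v hv x
  rw [e0, e1] at this
  rw [← this]
  simp [φ]

lemma rho_neg (x : Fin 2 → ℝ) : ρ A v hv (-x) = ρ A v hv x := by
  simp [ρ, NN, abs_neg]

lemma rho_add (x y : Fin 2 → ℝ) : ρ A v hv (x + y) ≤ ρ A v hv x + ρ A v hv y := by
  simp only [ρ, NN, map_add, Finsupp.add_apply]
  have a1 := abs_add_le ((bas A v hv).repr x 0) ((bas A v hv).repr y 0)
  have a2 := abs_add_le ((bas A v hv).repr x 1) ((bas A v hv).repr y 1)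
  nlinarith

lemma rho_continuous : Continuous (ρ A v hv) := by
  have c0 : Continuous fun x => ((bas A v hv).coord 0) x :=
    ((bas A v hv).coord 0).continuous_of_finiteDimensional
  have c1 : Continuous fun x => ((bas A v hv).coord 1) x :=
    ((bas A v hv).coord 1).continuous_of_finiteDimensional
  simp only [Module.Basis.coord_apply] at c0 c1
  unfold ρ NN
  exact (c0.abs.add (continuous_const.mul c1.abs))

include h in
lemma rho_invA (x : Fin 2 → ℝ) : ρ A v hv (A⁻¹ *ᵥ x) ≤ (5/6) * ρ A v hv x := by
  conv_lhs => rw [← phi_repr A v hv x, invA_phi A v h, rho_phi A v hv]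
  calc NN (step ((bas A v hv).repr x 0, (bas A v hv).repr x 1))
      ≤ (5/6) * NN ((bas A v hv).repr x 0, (bas A v hv).repr x 1) := NN_step _
    _ = (5/6) * ρ A v hv x := rfl

end basis


/-! ### The coding map π -/

def dig : Fin 3 → (Fin 2 → ℝ) := ![0, v, -(A *ᵥ v)]
def pd : Fin 3 → ℝ × ℝ := ![((0:ℝ),(0:ℝ)), ((1:ℝ),(0:ℝ)), ((0:ℝ),(-1:ℝ))]

lemma dig_eq (i : Fin 3) : dig A v i = φ A v (pd i) := by
  fin_cases i <;> simp [dig, pd, φ] <;> module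

lemma NN_pd (i : Fin 3) : NN (pd i) ≤ 3/2 := by
  fin_cases i <;> norm_num [pd, NN]

lemma NN_pd_sub (i j : Fin 3) : NN (pd i - pd j) ≤ 3 := by
  fin_cases i <;> fin_cases j <;> norm_num [pd, NN]

def consc (a : Fin 3) (ω : ℕ → Fin 3) : ℕ → Fin 3 := fun n => Nat.casesOn n a ω

@[simp] lemma consc_zero (a : Fin 3) (ω : ℕ → Fin 3) : consc a ω 0 = a := rfl
@[simp] lemma consc_succ (a : Fin 3) (ω : ℕ → Fin 3) (n : ℕ) : consc a ω (n+1) = ω n := rfl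

lemma consc_eta (ω : ℕ → Fin 3) : consc (ω 0) (fun n => ω (n+1)) = ω := by
  funext n; cases n <;> rfl

def mulInvL : (Fin 2 → ℝ) →L[ℝ] (Fin 2 → ℝ) :=
  LinearMap.toContinuousLinearMap (Matrix.mulVecLin A⁻¹)

@[simp] lemma mulInvL_apply (x : Fin 2 → ℝ) : mulInvL A x = A⁻¹ *ᵥ x := rfl

def piMap (ω : ℕ → Fin 3) : Fin 2 → ℝ := ∑' n, (A⁻¹ ^ (n+1)) *ᵥ dig A v (ω n)

section withh2
variable (h : A * A + A - (3 : ℝ) • (1 : Matrix (Fin 2) (Fin 2) ℝ) = 0)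
include h

lemma summable_dig (ω : ℕ → Fin 3) :
    Summable (fun n => (A⁻¹ ^ (n+1)) *ᵥ dig A v (ω n)) := by
  have : (fun n => (A⁻¹ ^ (n+1)) *ᵥ dig A v (ω n))
      = fun n => (A⁻¹ ^ (n+1)) *ᵥ φ A v (pd (ω n)) := by
    funext n; rw [dig_eq]
  rw [this]
  exact summable_phi_seq A v h (fun n => pd (ω n)) (3/2) (fun n => NN_pd _)

lemma hasSum_pi (ω : ℕ → Fin 3) :
    HasSum (fun n => (A⁻¹ ^ (n+1)) *ᵥ dig A v (ω n)) (piMap A v ω) :=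
  (summable_dig A v h ω).hasSum

lemma pi_cons (a : Fin 3) (ω : ℕ → Fin 3) :
    piMap A v (consc a ω) = A⁻¹ *ᵥ (dig A v a + piMap A v ω) := by
  have h1 := (mulInvL A).hasSum (hasSum_pi A v h ω)
  have h2 : HasSum (fun n => (A⁻¹ ^ (n+1+1)) *ᵥ dig A v (consc a ω (n+1)))
      (A⁻¹ *ᵥ piMap A v ω) := by
    have he : (fun n => (A⁻¹ ^ (n+1+1)) *ᵥ dig A v (consc a ω (n+1)))
        = fun n => mulInvL A ((A⁻¹ ^ (n+1)) *ᵥ dig A v (ω n)) := by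
      funext n
      rw [consc_succ, mulInvL_apply, mulVec_mulVec, pow_succ' A⁻¹ (n+1)]
    rw [he]
    exact h1
  have h3 := (hasSum_nat_add_iff (f := fun n => (A⁻¹ ^ (n+1)) *ᵥ dig A v (consc a ω n)) 1).mp h2
  rw [Finset.sum_range_one] at h3
  have h4 := h3.tsum_eq
  rw [show piMap A v (consc a ω) = ∑' n, (A⁻¹ ^ (n+1)) *ᵥ dig A v (consc a ω n) from rfl, h4]
  rw [pow_one, consc_zero, mulVec_add, add_comm]

end withh2


omit h

lemma phi_sub (p q : ℝ × ℝ) : φ A v (p - q) = φ A v p - φ A v q := by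
  simp only [φ, Prod.fst_sub, Prod.snd_sub]; module

lemma geom_partial (n : ℕ) :
    ∑ i ∈ range n, 3*(5/6:ℝ)^(i+1) ≤ 15 - 15*(5/6:ℝ)^n := by
  induction n with
  | zero => simp
  | succ n ih =>
      rw [sum_range_succ]
      have : ((5:ℝ)/6)^(n+1) = (5/6)^n * (5/6) := by rw [pow_succ]
      nlinarith [pow_nonneg (by norm_num : (0:ℝ) ≤ 5/6) n]

section rholemmas
variable (hv : LinearIndependent ℝ ![v, A *ᵥ v])

lemma rho_sum_le (f : ℕ → Fin 2 → ℝ) (n : ℕ) :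
    ρ A v hv (∑ i ∈ range n, f i) ≤ ∑ i ∈ range n, ρ A v hv (f i) := by
  induction n with
  | zero => simp [rho_zero]
  | succ n ih =>
      rw [sum_range_succ, sum_range_succ]
      exact le_trans (rho_add A v hv _ _) (add_le_add ih le_rfl)

variable (h : A * A + A - (3 : ℝ) • (1 : Matrix (Fin 2) (Fin 2) ℝ) = 0)
include h

lemma rho_term_le (i j : Fin 3) (k : ℕ) :
    ρ A v hv ((A⁻¹ ^ (k+1)) *ᵥ (dig A v i - dig A v j)) ≤ 3*(5/6:ℝ)^(k+1) := by
  rw [dig_eq, dig_eq, ← phi_sub, pow_invA_phi A v h, rho_phi]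
  calc NN (step^[k+1] (pd i - pd j)) ≤ (5/6)^(k+1) * NN (pd i - pd j) := NN_iter _ _
    _ ≤ (5/6)^(k+1) * 3 := by
        have := NN_pd_sub i j
        have hp : (0:ℝ) ≤ (5/6:ℝ)^(k+1) := by positivity
        nlinarith
    _ = 3*(5/6:ℝ)^(k+1) := by ring

lemma rho_pi_sub (ω σ : ℕ → Fin 3) :
    ρ A v hv (piMap A v ω - piMap A v σ) ≤ 15 := by
  have hsum := (hasSum_pi A v h ω).sub (hasSum_pi A v h σ)
  have he : (fun n => (A⁻¹ ^ (n+1)) *ᵥ dig A v (ω n) - (A⁻¹ ^ (n+1)) *ᵥ dig A v (σ n))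
      = fun n => (A⁻¹ ^ (n+1)) *ᵥ (dig A v (ω n) - dig A v (σ n)) := by
    funext n; rw [mulVec_sub]
  rw [he] at hsum
  refine le_of_tendsto (((rho_continuous A v hv).tendsto _).comp hsum.tendsto_sum_nat)
    (Filter.Eventually.of_forall fun n => ?_)
  calc ρ A v hv (∑ i ∈ range n, (A⁻¹ ^ (i+1)) *ᵥ (dig A v (ω i) - dig A v (σ i)))
      ≤ ∑ i ∈ range n, ρ A v hv ((A⁻¹ ^ (i+1)) *ᵥ (dig A v (ω i) - dig A v (σ i))) :=
        rho_sum_le A v hv _ n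
    _ ≤ ∑ i ∈ range n, 3*(5/6:ℝ)^(i+1) :=
        Finset.sum_le_sum (fun i _ => rho_term_le A v h hv _ _ i)
    _ ≤ 15 - 15*(5/6:ℝ)^n := geom_partial n
    _ ≤ 15 := by nlinarith [pow_nonneg (by norm_num : (0:ℝ) ≤ 5/6) n]

end rholemmas

section cont
variable (h : A * A + A - (3 : ℝ) • (1 : Matrix (Fin 2) (Fin 2) ℝ) = 0)
include h

lemma continuous_piMap : Continuous (piMap A v) := by
  apply continuous_tsum (u := fun n => ((‖v‖ + ‖A *ᵥ v‖)*(3/2))*(5/6:ℝ)^n)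
  · intro n
    have hc : Continuous fun i : Fin 3 => (A⁻¹ ^ (n+1)) *ᵥ dig A v i :=
      continuous_of_discreteTopology
    exact hc.comp (continuous_apply n)
  · exact summable_geom_mul _
  · intro n ω
    rw [dig_eq]
    calc ‖(A⁻¹ ^ (n+1)) *ᵥ φ A v (pd (ω n))‖
        ≤ ((‖v‖ + ‖A *ᵥ v‖) * NN (pd (ω n))) * (5/6)^n := norm_term_le A v h _ n
      _ ≤ ((‖v‖ + ‖A *ᵥ v‖)*(3/2))*(5/6:ℝ)^n := by
          have hC : (0:ℝ) ≤ ‖v‖ + ‖A *ᵥ v‖ := by positivity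
          have hp : (0:ℝ) ≤ (5/6:ℝ)^n := by positivity
          exact mul_le_mul_of_nonneg_right
            (mul_le_mul_of_nonneg_left (NN_pd _) hC) hp

lemma dig_mem (D : Set (Fin 2 → ℝ)) (hD : D = {0, v, -(A *ᵥ v)}) (i : Fin 3) :
    dig A v i ∈ D := by
  fin_cases i <;> simp [dig, hD]

lemma selfAffine_eq (D : Set (Fin 2 → ℝ)) (hD : D = {0, v, -(A *ᵥ v)}) :
    selfAffine A D = Set.range (piMap A v) := by
  ext x
  constructor
  · rintro ⟨d, hd, hsum⟩
    have hch : ∀ n, ∃ i : Fin 3, dig A v i = d n := by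
      intro n
      have hmem := hd n
      rw [hD] at hmem
      rcases hmem with h0 | h1 | h2
      · exact ⟨0, by rw [h0]; simp [dig]⟩
      · exact ⟨1, by rw [h1]; simp [dig]⟩
      · exact ⟨2, by rw [h2]; simp [dig]⟩
    choose ω hω using hch
    refine ⟨ω, ?_⟩
    have he : (fun n => (A⁻¹ ^ (n+1)) *ᵥ dig A v (ω n)) = fun n => (A⁻¹ ^ (n+1)) *ᵥ d n :=
      funext fun n => by rw [hω n]
    show (∑' n, (A⁻¹ ^ (n+1)) *ᵥ dig A v (ω n)) = x
    rw [he]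
    exact hsum.tsum_eq
  · rintro ⟨ω, rfl⟩
    exact ⟨fun n => dig A v (ω n), fun n => dig_mem A v h D hD (ω n), hasSum_pi A v h ω⟩

end cont


/-! ### Chains -/

section chain
variable (hv : LinearIndependent ℝ ![v, A *ᵥ v])

def Linked (ε : ℝ) (x y : Fin 2 → ℝ) : Prop :=
  ∃ (m : ℕ) (c : ℕ → ℕ → Fin 3), piMap A v (c 0) = x ∧ piMap A v (c m) = y ∧
    ∀ i, i < m → ρ A v hv (piMap A v (c (i+1)) - piMap A v (c i)) ≤ ε

lemma linked_single (ε : ℝ) (ω σ : ℕ → Fin 3)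
    (hρ : ρ A v hv (piMap A v σ - piMap A v ω) ≤ ε) :
    Linked A v hv ε (piMap A v ω) (piMap A v σ) := by
  refine ⟨1, fun i => if i = 0 then ω else σ, by simp, by simp, ?_⟩
  intro i hi
  have : i = 0 := by omega
  subst this
  simpa using hρ

lemma linked_trans {ε : ℝ} {x y z : Fin 2 → ℝ} (h1 : Linked A v hv ε x y)
    (h2 : Linked A v hv ε y z) : Linked A v hv ε x z := by
  obtain ⟨m, c, hc0, hcm, hstep⟩ := h1
  obtain ⟨m', c', hc0', hcm', hstep'⟩ := h2
  refine ⟨m + m', fun i => if i ≤ m then c i else c' (i - m), ?_, ?_, ?_⟩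
  · simp [hc0]
  · dsimp only
    by_cases hm' : m' = 0
    · subst hm'
      rw [if_pos (by omega : m + 0 ≤ m)]
      have : y = z := by rw [← hc0', ← hcm']
      simpa [this] using hcm
    · rw [if_neg (by omega : ¬ (m + m' ≤ m))]
      have : m + m' - m = m' := by omega
      rw [this, hcm']
  · intro i hi
    dsimp only
    by_cases h1i : i + 1 ≤ m
    · rw [if_pos h1i, if_pos (by omega : i ≤ m)]
      exact hstep i (by omega)
    · rw [if_neg h1i]
      by_cases h2i : i ≤ m
      · have him : i = m := by omega
        subst him
        rw [if_pos le_rfl, hcm, ← hc0']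
        have he : i + 1 - i = 1 := by omega
        rw [he]
        exact hstep' 0 (by omega)
      · have he : i + 1 - m = (i - m) + 1 := by omega
        rw [if_neg h2i, he]
        exact hstep' (i - m) (by omega)

lemma linked_symm {ε : ℝ} {x y : Fin 2 → ℝ} (h1 : Linked A v hv ε x y) :
    Linked A v hv ε y x := by
  obtain ⟨m, c, hc0, hcm, hstep⟩ := h1
  refine ⟨m, fun i => c (m - i), by simpa using hcm, by simpa using hc0, ?_⟩
  intro i hi
  dsimp only
  rw [← rho_neg A v hv, neg_sub]
  have e1 : m - i = (m - (i+1)) + 1 := by omega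
  rw [e1]
  exact hstep _ (by omega)

lemma linked_eq (ε : ℝ) (hε : 0 ≤ ε) (ω σ : ℕ → Fin 3)
    (hx : piMap A v ω = piMap A v σ) :
    Linked A v hv ε (piMap A v ω) (piMap A v σ) := by
  apply linked_single
  rw [← hx, sub_self, rho_zero]
  exact hε

variable (h : A * A + A - (3 : ℝ) • (1 : Matrix (Fin 2) (Fin 2) ℝ) = 0)
include h

lemma linked_cons (a : Fin 3) {ε : ℝ} {ω σ : ℕ → Fin 3}
    (hL : Linked A v hv ε (piMap A v ω) (piMap A v σ)) :
    Linked A v hv ((5/6)*ε) (piMap A v (consc a ω)) (piMap A v (consc a σ)) := by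
  obtain ⟨m, c, hc0, hcm, hstep⟩ := hL
  refine ⟨m, fun i => consc a (c i), ?_, ?_, ?_⟩
  · rw [pi_cons A v h, hc0, ← pi_cons A v h]
  · rw [pi_cons A v h, hcm, ← pi_cons A v h]
  · intro i hi
    have he : piMap A v (consc a (c (i+1))) - piMap A v (consc a (c i))
        = A⁻¹ *ᵥ (piMap A v (c (i+1)) - piMap A v (c i)) := by
      rw [pi_cons A v h, pi_cons A v h, ← mulVec_sub, add_sub_add_left_eq_sub]
    rw [he]
    calc ρ A v hv (A⁻¹ *ᵥ (piMap A v (c (i+1)) - piMap A v (c i)))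
        ≤ (5/6) * ρ A v hv (piMap A v (c (i+1)) - piMap A v (c i)) := rho_invA A v h hv _
      _ ≤ (5/6) * ε := by
          have := hstep i hi
          nlinarith [rho_nonneg A v hv (piMap A v (c (i+1)) - piMap A v (c i))]

end chain

section edges

def zC : ℕ → Fin 3 := fun _ => 0
def xC : ℕ → Fin 3 := consc 0 (fun _ => 2)
def yC : ℕ → Fin 3 := consc 2 zC

lemma pi_zC : piMap A v zC = 0 := by
  have he : (fun n => (A⁻¹ ^ (n+1)) *ᵥ dig A v (zC n)) = fun _ => (0 : Fin 2 → ℝ) := by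
    funext n; simp [zC, dig]
  rw [show piMap A v zC = ∑' n, (A⁻¹ ^ (n+1)) *ᵥ dig A v (zC n) from rfl, he, tsum_zero]

variable (h : A * A + A - (3 : ℝ) • (1 : Matrix (Fin 2) (Fin 2) ℝ) = 0)
include h

lemma edge01 : piMap A v (consc 0 zC) = piMap A v (consc 1 (consc 2 zC)) := by
  rw [pi_cons A v h, pi_cons A v h, pi_cons A v h, pi_zC]
  have h2 : A⁻¹ *ᵥ (dig A v 2 + 0) = -v := by
    rw [add_zero]
    show A⁻¹ *ᵥ (-(A *ᵥ v)) = -v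
    rw [mulVec_neg, mulVec_invA_Av A v h]
  rw [h2]
  show A⁻¹ *ᵥ ((0 : Fin 2 → ℝ) + 0) = A⁻¹ *ᵥ (v + -v)
  rw [add_zero, add_neg_cancel]

lemma edge12 : piMap A v (consc 1 xC) = piMap A v (consc 2 yC) := by
  have hyx : piMap A v yC - piMap A v xC = A *ᵥ v + v := by
    have hsum := (hasSum_pi A v h yC).sub (hasSum_pi A v h xC)
    have he : (fun n => (A⁻¹ ^ (n+1)) *ᵥ dig A v (yC n) - (A⁻¹ ^ (n+1)) *ᵥ dig A v (xC n))
        = fun n => (if n = 0 then (-1:ℝ) else 1) • ((A⁻¹ ^ (n+1)) *ᵥ (A *ᵥ v)) := by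
      funext n
      cases n with
      | zero => simp [yC, xC, zC, dig, mulVec_neg, -mulVec_fin_two]
      | succ k => simp [yC, xC, zC, dig, mulVec_neg, -mulVec_fin_two]
    rw [he] at hsum
    exact hsum.unique (part1 A v h)
  rw [pi_cons A v h, pi_cons A v h]
  have hy : piMap A v yC = piMap A v xC + (A *ᵥ v + v) := by
    rw [← hyx]; abel
  have harg : dig A v 1 + piMap A v xC = dig A v 2 + piMap A v yC := by
    have d1 : dig A v 1 = v := by simp [dig]
    have d2 : dig A v 2 = -(A *ᵥ v) := by simp [dig]
    rw [d1, d2, hy]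
    abel
  rw [harg]

lemma chain_lemma (hv : LinearIndependent ℝ ![v, A *ᵥ v]) (n : ℕ) :
    ∀ ω σ, Linked A v hv (15*(5/6:ℝ)^n) (piMap A v ω) (piMap A v σ) := by
  induction n with
  | zero =>
      intro ω σ
      apply linked_single
      simpa using rho_pi_sub A v h hv σ ω
  | succ n ih =>
      intro ω σ
      have hsp : ∀ (a : Fin 3) (α β : ℕ → Fin 3),
          Linked A v hv (15*(5/6:ℝ)^(n+1)) (piMap A v (consc a α)) (piMap A v (consc a β)) := by
        intro a α β
        have hc := linked_cons A v h hv a (ih α β)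
        rw [show (5/6) * (15*(5/6:ℝ)^n) = 15*(5/6:ℝ)^(n+1) from by ring] at hc
        exact hc
      have hε : (0:ℝ) ≤ 15*(5/6:ℝ)^(n+1) := by positivity
      have h01 : ∀ α β, Linked A v hv (15*(5/6:ℝ)^(n+1))
          (piMap A v (consc 0 α)) (piMap A v (consc 1 β)) := by
        intro α β
        exact linked_trans A v hv
          (linked_trans A v hv (hsp 0 α zC)
            (linked_eq A v hv _ hε _ _ (edge01 A v h)))
          (hsp 1 (consc 2 zC) β)
      have h12 : ∀ α β, Linked A v hv (15*(5/6:ℝ)^(n+1))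
          (piMap A v (consc 1 α)) (piMap A v (consc 2 β)) := by
        intro α β
        exact linked_trans A v hv
          (linked_trans A v hv (hsp 1 α xC)
            (linked_eq A v hv _ hε _ _ (edge12 A v h)))
          (hsp 2 yC β)
      have hmain : ∀ (i j : Fin 3) (α β : ℕ → Fin 3),
          Linked A v hv (15*(5/6:ℝ)^(n+1)) (piMap A v (consc i α)) (piMap A v (consc j β)) := by
        intro i j α β
        fin_cases i <;> fin_cases j
        · exact hsp 0 α β
        · exact h01 α β
        · exact linked_trans A v hv (h01 α xC) (h12 xC β)
        · exact linked_symm A v hv (h01 β α)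
        · exact hsp 1 α β
        · exact h12 α β
        · exact linked_symm A v hv (linked_trans A v hv (h01 β xC) (h12 xC α))
        · exact linked_symm A v hv (h12 β α)
        · exact hsp 2 α β
      have := hmain (ω 0) (σ 0) (fun n => ω (n+1)) (fun n => σ (n+1))
      rwa [consc_eta, consc_eta] at this

end edges

end
end S15

open Matrix

theorem stmt15 (A : Matrix (Fin 2) (Fin 2) ℝ)
    (h : A * A + A - (3 : ℝ) • (1 : Matrix (Fin 2) (Fin 2) ℝ) = 0)
    (v : Fin 2 → ℝ) (hv : LinearIndependent ℝ ![v, A *ᵥ v])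
    (D : Set (Fin 2 → ℝ)) (hD : D = {0, v, -(A *ᵥ v)}) :
    HasSum (fun i : ℕ =>
        (if i = 0 then (-1 : ℝ) else 1) • (A⁻¹ ^ (i + 1) *ᵥ (A *ᵥ v)))
      (A *ᵥ v + v) ∧
    IsConnected (selfAffine A D) := by
  classical
  constructor
  · exact S15.part1 A v h
  · rw [S15.selfAffine_eq A v h D hD]
    constructor
    · exact ⟨S15.piMap A v S15.zC, Set.mem_range_self _⟩
    · intro U V hU hV hcover h1 h2
      obtain ⟨x, hxT, hxU⟩ := h1
      obtain ⟨y, hyT, hyV⟩ := h2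
      by_contra hempty
      rw [Set.not_nonempty_iff_eq_empty] at hempty
      set T := Set.range (S15.piMap A v) with hT
      have hTcomp : IsCompact T := isCompact_range (S15.continuous_piMap A v h)
      have hUV : ∀ z, z ∈ T → z ∈ U → z ∈ V → False := by
        intro z hzT hzU hzV
        exact Set.eq_empty_iff_forall_notMem.mp hempty z ⟨hzT, hzU, hzV⟩
      have hKu : IsCompact (T ∩ U) := by
        have : T ∩ U = T ∩ Vᶜ := by
          ext z
          constructor
          · rintro ⟨hzT, hzU⟩; exact ⟨hzT, fun hzV => hUV z hzT hzU hzV⟩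
          · rintro ⟨hzT, hzV⟩; exact ⟨hzT, (hcover hzT).resolve_right hzV⟩
        rw [this]
        exact hTcomp.inter_right hV.isClosed_compl
      have hKv : IsCompact (T ∩ V) := by
        have : T ∩ V = T ∩ Uᶜ := by
          ext z
          constructor
          · rintro ⟨hzT, hzV⟩; exact ⟨hzT, fun hzU => hUV z hzT hzU hzV⟩
          · rintro ⟨hzT, hzU⟩; exact ⟨hzT, (hcover hzT).resolve_left hzU⟩
        rw [this]
        exact hTcomp.inter_right hU.isClosed_compl
      -- minimum of ρ-distance on (T ∩ U) × (T ∩ V)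
      have hFcont : Continuous fun p : (Fin 2 → ℝ) × (Fin 2 → ℝ) => S15.ρ A v hv (p.1 - p.2) :=
        (S15.rho_continuous A v hv).comp (continuous_fst.sub continuous_snd)
      obtain ⟨⟨p, q⟩, hpq, hmin⟩ := (hKu.prod hKv).exists_isMinOn
        (Set.prod_nonempty_iff.mpr ⟨⟨x, hxT, hxU⟩, ⟨y, hyT, hyV⟩⟩) hFcont.continuousOn
      set δ := S15.ρ A v hv (p - q) with hδ
      have hδpos : 0 < δ := by
        rcases lt_or_eq_of_le (S15.rho_nonneg A v hv (p - q)) with hlt | heq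
        · exact hlt
        · exfalso
          have hpq0 : p - q = 0 := S15.rho_eq_zero A v hv heq.symm
          have hpqe : p = q := by
            have := sub_eq_zero.mp hpq0
            exact this
          obtain ⟨⟨hpT, hpU⟩, hqT, hqV⟩ := hpq
          exact hUV p hpT hpU (hpqe ▸ hqV)
      obtain ⟨n, hn⟩ := exists_pow_lt_of_lt_one (show (0:ℝ) < δ/15 by linarith)
        (show (5/6:ℝ) < 1 by norm_num)
      have hεδ : 15*(5/6:ℝ)^n < δ := by
        have : (5/6:ℝ)^n < δ/15 := hn
        linarith
      obtain ⟨ωx, rfl⟩ := hxT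
      obtain ⟨ωy, rfl⟩ := hyT
      obtain ⟨m, c, hc0, hcm, hstep⟩ := S15.chain_lemma A v h hv n ωx ωy
      -- find the first chain point in V
      have hexV : ∃ i, S15.piMap A v (c i) ∈ V := ⟨m, hcm ▸ hyV⟩
      set j := Nat.find hexV with hj
      have hPj : S15.piMap A v (c j) ∈ V := Nat.find_spec hexV
      have hjm : j ≤ m := Nat.find_min' hexV (hcm ▸ hyV)
      have hj0 : j ≠ 0 := by
        intro h0
        have : S15.piMap A v (c 0) ∈ V := h0 ▸ hPj
        exact hUV _ (Set.mem_range_self _) (hc0 ▸ hxU) (hc0 ▸ this)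
      obtain ⟨k, hk⟩ : ∃ k, j = k + 1 := ⟨j - 1, by omega⟩
      have hkV : S15.piMap A v (c k) ∉ V := Nat.find_min hexV (by omega)
      have hkU : S15.piMap A v (c k) ∈ U :=
        (hcover (Set.mem_range_self _)).resolve_right hkV
      have hmem : (S15.piMap A v (c k), S15.piMap A v (c j)) ∈ (T ∩ U) ×ˢ (T ∩ V) :=
        ⟨⟨Set.mem_range_self _, hkU⟩, Set.mem_range_self _, hPj⟩
      have hge : δ ≤ S15.ρ A v hv (S15.piMap A v (c k) - S15.piMap A v (c j)) := by
        have := isMinOn_iff.mp hmin _ hmem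
        simpa using this
      have hle : S15.ρ A v hv (S15.piMap A v (c k) - S15.piMap A v (c j)) ≤ 15*(5/6:ℝ)^n := by
        rw [← S15.rho_neg A v hv, neg_sub, hk]
        exact hstep k (by omega)
      linarith
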